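/- arXiv:1704.04295 — 2 statements merged into one kernel-verified Lean document; each statement's English description precedes it below -/
import Mathlib

section
/- In diffusion on a graph, the potential P(t) = Σ_v w_v(t)·w_v(t+1) is non-increasing: P(t+1) ≤ P(t) for all t ≥ 0. -/
open Finset Classical

/-- One step of the diffusion process: each vertex gains one chip from each
neighbour with a strictly larger label and loses one chip to each neighbour
with a strictly smaller label. -/
noncomputable def diffStep {n : ℕ} (G : SimpleGraph (Fin n)) (w : Fin n → ℤ) : Fin n → ℤ :=
  fun v => w v + ((Finset.univ.filter fun u => G.Adj v u ∧ w v < w u).card : ℤ)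
             - ((Finset.univ.filter fun u => G.Adj v u ∧ w u < w v).card : ℤ)

/-- The labelling at time `t` of the diffusion process started from `w0`. -/
noncomputable def diff {n : ℕ} (G : SimpleGraph (Fin n)) (w0 : Fin n → ℤ) (t : ℕ) : Fin n → ℤ :=
  (diffStep G)^[t] w0

/-- The potential `P(t) = ∑_v w_v(t) · w_v(t+1)`. -/
noncomputable def pot {n : ℕ} (G : SimpleGraph (Fin n)) (w0 : Fin n → ℤ) (t : ℕ) : ℤ :=
  ∑ v, diff G w0 t v * diff G w0 (t + 1) v

/-- `x_{uv}(t) = sgn(w_u(t) - w_v(t))` for edges, `0` for non-edges. -/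
noncomputable def xlab {n : ℕ} (G : SimpleGraph (Fin n)) (w0 : Fin n → ℤ)
    (u v : Fin n) (t : ℕ) : ℤ :=
  if G.Adj u v then Int.sign (diff G w0 t u - diff G w0 t v) else 0

/-- `y_{uv}(t) = sgn(w_u(t+1) - w_v(t+1))` for edges, `0` for non-edges. -/
noncomputable def ylab {n : ℕ} (G : SimpleGraph (Fin n)) (w0 : Fin n → ℤ)
    (u v : Fin n) (t : ℕ) : ℤ :=
  if G.Adj u v then Int.sign (diff G w0 (t + 1) u - diff G w0 (t + 1) v) else 0

/-- The label `(x_{uv}(t), y_{uv}(t))` of the edge `uv` at time `t`. -/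
noncomputable def elabel {n : ℕ} (G : SimpleGraph (Fin n)) (w0 : Fin n → ℤ)
    (u v : Fin n) (t : ℕ) : ℤ × ℤ :=
  (xlab G w0 u v t, ylab G w0 u v t)

lemma step_eq {n : ℕ} (G : SimpleGraph (Fin n)) (w : Fin n → ℤ) (v : Fin n) :
    diffStep G w v = w v + ∑ u, (if G.Adj v u then (w u - w v).sign else 0) := by
  unfold diffStep
  have h1 : ((Finset.univ.filter fun u => G.Adj v u ∧ w v < w u).card : ℤ)
      = ∑ u, if G.Adj v u ∧ w v < w u then (1:ℤ) else 0 := by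
    rw [Finset.card_filter]; push_cast; rfl
  have h2 : ((Finset.univ.filter fun u => G.Adj v u ∧ w u < w v).card : ℤ)
      = ∑ u, if G.Adj v u ∧ w u < w v then (1:ℤ) else 0 := by
    rw [Finset.card_filter]; push_cast; rfl
  rw [h1, h2, add_sub_assoc, ← Finset.sum_sub_distrib]
  congr 1
  apply Finset.sum_congr rfl
  intro u _
  by_cases h : G.Adj v u
  · simp only [h, true_and, if_true]
    rcases lt_trichotomy (w v) (w u) with hlt | heq | hgt
    · rw [if_pos hlt, if_neg (by omega), Int.sign_eq_one_of_pos (by omega)]; ring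
    · simp [heq]
    · rw [if_neg (by omega), if_pos hgt, Int.sign_eq_neg_one_of_neg (by omega)]; ring
  · simp [h]

lemma sign_cases (x : ℤ) : x.sign = 1 ∨ x.sign = 0 ∨ x.sign = -1 := by
  rcases lt_trichotomy x 0 with h | h | h
  · exact Or.inr (Or.inr (Int.sign_eq_neg_one_of_neg h))
  · exact Or.inr (Or.inl (by rw [h]; rfl))
  · exact Or.inl (Int.sign_eq_one_of_pos h)

theorem stmt5 {n : ℕ} (G : SimpleGraph (Fin n)) (w0 : Fin n → ℤ) (t : ℕ) :
    pot G w0 (t + 1) ≤ pot G w0 t := by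
  -- abbreviations
  set a : Fin n → ℤ := diff G w0 t with ha
  set b : Fin n → ℤ := diff G w0 (t + 1) with hb
  set c : Fin n → ℤ := diff G w0 (t + 2) with hc
  have hba : b = diffStep G a := by
    rw [ha, hb, diff, diff, Function.iterate_succ_apply']
  have hcb : c = diffStep G b := by
    rw [hb, hc, diff, diff, Function.iterate_succ_apply']
  -- edge contribution function
  set e : (Fin n → ℤ) → Fin n → Fin n → ℤ :=
    fun w v u => if G.Adj v u then (w u - w v).sign else 0 with he
  have hbv : ∀ v, b v = a v + ∑ u, e a v u := by
    intro v; rw [hba]; exact step_eq G a v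
  have hcv : ∀ v, c v = b v + ∑ u, e b v u := by
    intro v; rw [hcb]; exact step_eq G b v
  -- key pointwise inequality
  set F : Fin n → Fin n → ℤ := fun v u => b v * (e b v u + e a v u) with hF
  have key : ∀ v u, F v u + F u v ≤ 0 := by
    intro v u
    by_cases hadj : G.Adj v u
    · have hadj' : G.Adj u v := hadj.symm
      simp only [hF, he, if_pos hadj, if_pos hadj']
      have h1 : a v - a u = -(a u - a v) := by ring
      have h2 : b v - b u = -(b u - b v) := by ring
      rw [h1, h2, Int.sign_neg, Int.sign_neg]
      set d : ℤ := b u - b v with hd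
      set s : ℤ := (a u - a v).sign with hs
      have habs : d * d.sign = |d| := by
        rcases abs_cases d with ⟨h, _⟩ | ⟨h, hneg⟩
        · rcases eq_or_lt_of_le (by omega : (0:ℤ) ≤ d) with h0 | h0
          · simp [← h0]
          · rw [Int.sign_eq_one_of_pos h0]; omega
        · rw [Int.sign_eq_neg_one_of_neg hneg]; omega
      have hds : -|d| ≤ d * s := by
        rcases sign_cases (a u - a v) with h | h | h <;> rw [← hs] at h <;> rw [h] <;>
          rcases abs_cases d with ⟨h', _⟩ | ⟨h', _⟩ <;> omega
      have expand : b v * (d.sign + s) + b u * (-d.sign + -s) = -(d * d.sign) - d * s := by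
        rw [hd]; ring
      rw [expand, habs]
      omega
    · have hadj' : ¬ G.Adj u v := fun h => hadj h.symm
      simp [hF, he, hadj, hadj']
  -- sum it up
  have hsum : ∑ v, ∑ u, F v u ≤ 0 := by
    have hswap : ∑ v, ∑ u, F v u = ∑ v, ∑ u, F u v := Finset.sum_comm
    have h2 : (∑ v, ∑ u, F v u) + (∑ v, ∑ u, F u v) = ∑ v, ∑ u, (F v u + F u v) := by
      rw [← Finset.sum_add_distrib]
      exact Finset.sum_congr rfl fun v _ => (Finset.sum_add_distrib).symm
    have h3 : ∑ v, ∑ u, (F v u + F u v) ≤ 0 :=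
      Finset.sum_nonpos fun v _ => Finset.sum_nonpos fun u _ => key v u
    omega
  have hdiff : pot G w0 (t + 1) - pot G w0 t = ∑ v, ∑ u, F v u := by
    unfold pot
    rw [← ha, ← hb]
    have hcc : diff G w0 (t + 1 + 1) = c := by rw [hc]
    rw [hcc, ← Finset.sum_sub_distrib]
    apply Finset.sum_congr rfl
    intro v _
    have h1 : c v - b v = ∑ u, e b v u := by rw [hcv v]; ring
    have h2 : b v - a v = ∑ u, e a v u := by rw [hbv v]; ring
    calc b v * c v - a v * b v = b v * ((c v - b v) + (b v - a v)) := by ring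
      _ = ∑ u, F v u := by
          rw [h1, h2, ← Finset.sum_add_distrib, Finset.mul_sum]
  omega
end

section
/- In diffusion on any finite graph from any integer initial configuration, the labels remain bounded: there exists M such that |w_v(t)| ≤ M for all vertices v and all times t. -/
open Finset Classical

section aux
variable {n : ℕ} (G : SimpleGraph (Fin n)) (w0 : Fin n → ℤ)

lemma sign_bounds (a : ℤ) : -1 ≤ Int.sign a ∧ Int.sign a ≤ 1 := by
  rcases lt_trichotomy a 0 with h | h | h
  · rw [Int.sign_eq_neg_one_iff_neg.2 h]; norm_num
  · simp [h]
  · rw [Int.sign_eq_one_iff_pos.2 h]; norm_num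

lemma sign_as_ite (a b : ℤ) :
    Int.sign (a - b) = (if b < a then (1:ℤ) else 0) - (if a < b then 1 else 0) := by
  rcases lt_trichotomy a b with h | h | h
  · simp [h, not_lt.2 h.le, Int.sign_eq_neg_one_iff_neg.2 (sub_neg.2 h)]
  · simp [h]
  · simp [h, not_lt.2 h.le, Int.sign_eq_one_iff_pos.2 (sub_pos.2 h)]

lemma diffStep_eq {n : ℕ} (G : SimpleGraph (Fin n)) (w : Fin n → ℤ) (v : Fin n) :
    diffStep G w v = w v + ∑ u ∈ univ.filter (fun u => G.Adj v u),
      Int.sign (w u - w v) := by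
  have : ∑ u ∈ univ.filter (fun u => G.Adj v u), Int.sign (w u - w v)
      = ((univ.filter (fun u => G.Adj v u ∧ w v < w u)).card : ℤ)
        - ((univ.filter (fun u => G.Adj v u ∧ w u < w v)).card : ℤ) := by
    rw [← Finset.filter_filter, ← Finset.filter_filter]
    rw [← Finset.sum_boole, ← Finset.sum_boole, ← Finset.sum_sub_distrib]
    exact Finset.sum_congr rfl fun u _ => sign_as_ite _ _
  rw [this, diffStep]; ring

lemma diff_succ (t : ℕ) : diff G w0 (t+1) = diffStep G (diff G w0 t) := by
  simp [diff, Function.iterate_succ_apply']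

lemma pot_mono (t : ℕ) : pot G w0 (t+1) ≤ pot G w0 t := by
  set w := diff G w0 t with hw
  set w' := diff G w0 (t+1) with hw'
  set w'' := diff G w0 (t+2) with hw''
  set g : Fin n → Fin n → ℤ := fun v u =>
    if G.Adj v u then w' v * (Int.sign (w' u - w' v) + Int.sign (w u - w v)) else 0
    with hg
  have key : pot G w0 (t+1) - pot G w0 t = ∑ v, ∑ u, g v u := by
    have h1 : ∀ v, w'' v - w v = ∑ u ∈ univ.filter (fun u => G.Adj v u),
        (Int.sign (w' u - w' v) + Int.sign (w u - w v)) := by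
      intro v
      have e1 : w' v = w v + ∑ u ∈ univ.filter (fun u => G.Adj v u), Int.sign (w u - w v) := by
        rw [hw', diff_succ]; exact diffStep_eq G w v
      have e2 : w'' v = w' v + ∑ u ∈ univ.filter (fun u => G.Adj v u), Int.sign (w' u - w' v) := by
        rw [hw'', show t + 2 = (t+1) + 1 from rfl, diff_succ]; exact diffStep_eq G w' v
      rw [Finset.sum_add_distrib]; linarith
    have : pot G w0 (t+1) - pot G w0 t = ∑ v, w' v * (w'' v - w v) := by
      simp only [pot, ← hw, ← hw', ← hw'']
      rw [← Finset.sum_sub_distrib]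
      exact Finset.sum_congr rfl fun v _ => by ring
    rw [this]
    refine Finset.sum_congr rfl fun v _ => ?_
    rw [h1, Finset.mul_sum, Finset.sum_filter]
  have pair : ∀ v u, g v u + g u v ≤ 0 := by
    intro v u
    simp only [hg]
    by_cases hAdj : G.Adj v u
    · rw [if_pos hAdj, if_pos hAdj.symm]
      have hsym : ∀ a b : ℤ, Int.sign (a - b) = - Int.sign (b - a) := by
        intro a b; rw [← Int.sign_neg]; ring_nf
      rw [hsym (w' v) (w' u), hsym (w v) (w u)]
      set d : ℤ := w' u - w' v with hd
      set s : ℤ := Int.sign (w u - w v) with hs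
      have h1 : d * Int.sign d = |d| := by
        rw [Int.mul_sign_self]; exact (Int.abs_eq_natAbs d).symm
      have h2 : -1 ≤ s := (sign_bounds _).1
      have h3 : s ≤ 1 := (sign_bounds _).2
      have h4 : -|d| ≤ d * s := by
        rcases le_or_gt 0 d with h | h
        · nlinarith [abs_of_nonneg h]
        · nlinarith [abs_of_neg h]
      have : w' v * (Int.sign d + s) + w' u * (-Int.sign d + -s)
          = -(d * Int.sign d + d * s) := by rw [hd]; ring
      rw [this]; linarith
    · rw [if_neg hAdj, if_neg (fun h => hAdj h.symm)]; norm_num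
  have h2 : (2:ℤ) * (∑ v, ∑ u, g v u) ≤ 0 := by
    have hc : ∑ v, ∑ u, g v u = ∑ v, ∑ u, g u v := Finset.sum_comm
    have : (2:ℤ) * (∑ v, ∑ u, g v u) = ∑ v, ∑ u, (g v u + g u v) := by
      simp only [Finset.sum_add_distrib]
      rw [← hc]; ring
    rw [this]
    refine Finset.sum_nonpos fun v _ => Finset.sum_nonpos fun u _ => pair v u
  linarith [key]

lemma step_close (t : ℕ) (v : Fin n) : |diff G w0 (t+1) v - diff G w0 t v| ≤ n := by
  rw [diff_succ, diffStep]
  have h1 : ((univ.filter fun u => G.Adj v u ∧ diff G w0 t v < diff G w0 t u).card : ℤ) ≤ n := by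
    exact_mod_cast (Finset.card_filter_le _ _).trans (le_of_eq (Finset.card_univ.trans (Fintype.card_fin n)))
  have h2 : ((univ.filter fun u => G.Adj v u ∧ diff G w0 t u < diff G w0 t v).card : ℤ) ≤ n := by
    exact_mod_cast (Finset.card_filter_le _ _).trans (le_of_eq (Finset.card_univ.trans (Fintype.card_fin n)))
  rw [abs_le]
  constructor <;> [skip; skip] <;>
    · push_cast
      nlinarith [Int.ofNat_nonneg (univ.filter fun u => G.Adj v u ∧ diff G w0 t v < diff G w0 t u).card,
        Int.ofNat_nonneg (univ.filter fun u => G.Adj v u ∧ diff G w0 t u < diff G w0 t v).card]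

lemma pot_lower (t : ℕ) : (∑ v, (diff G w0 t v)^2) - n^3 ≤ 2 * pot G w0 t := by
  have h : ∀ v : Fin n, (diff G w0 t v)^2 - n^2 ≤ 2 * (diff G w0 t v * diff G w0 (t+1) v) := by
    intro v
    have h1 := step_close G w0 t v
    rw [abs_le] at h1
    nlinarith [sq_nonneg (diff G w0 (t+1) v), h1.1, h1.2,
      mul_nonneg (by linarith [h1.2] : (0:ℤ) ≤ (n:ℤ) - (diff G w0 (t+1) v - diff G w0 t v))
        (by linarith [h1.1] : (0:ℤ) ≤ (n:ℤ) + (diff G w0 (t+1) v - diff G w0 t v))]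
  have := Finset.sum_le_sum (fun v (_ : v ∈ (univ : Finset (Fin n))) => h v)
  rw [Finset.sum_sub_distrib, ← Finset.mul_sum] at this
  simp only [Finset.sum_const, Finset.card_univ, Fintype.card_fin, nsmul_eq_mul] at this
  have : (∑ v, (diff G w0 t v)^2) - n * n^2 ≤ 2 * pot G w0 t := by
    rw [pot]; convert this using 2 <;> ring
  calc (∑ v, (diff G w0 t v)^2) - n^3 = (∑ v, (diff G w0 t v)^2) - n * n^2 := by ring
    _ ≤ 2 * pot G w0 t := this

lemma pot_le (t : ℕ) : pot G w0 t ≤ pot G w0 0 := by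
  induction t with
  | zero => exact le_rfl
  | succ k ih => exact (pot_mono G w0 k).trans ih

end aux

theorem stmt19 {n : ℕ} (G : SimpleGraph (Fin n)) (w0 : Fin n → ℤ) :
    ∃ M : ℤ, ∀ t : ℕ, ∀ v : Fin n, |diff G w0 t v| ≤ M := by
  refine ⟨2 * pot G w0 0 + n^3 + 1, fun t v => ?_⟩
  have h1 : (diff G w0 t v)^2 ≤ ∑ u, (diff G w0 t u)^2 :=
    Finset.single_le_sum (f := fun u => (diff G w0 t u)^2) (fun u _ => sq_nonneg _) (Finset.mem_univ v)
  have h2 := pot_lower G w0 t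
  have h3 := pot_le G w0 t
  have h4 : |diff G w0 t v| ≤ (diff G w0 t v)^2 + 1 := by
    rcases eq_or_ne (diff G w0 t v) 0 with h | h
    · simp [h]
    · have : 1 ≤ |diff G w0 t v| := Int.one_le_abs h
      nlinarith [sq_abs (diff G w0 t v)]
  linarith
end
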